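/- Under the gluing setup, the dimer partition function factorizes through the cut: Σ_{M perfect matching of G} ∏_{e∈M} x_e = Σ_{A ⊆ C} Q1(A)·Q2(C∖A), where a perfect matching of G is a set of pairwise non-adjacent non-loop edges covering every vertex of V exactly once, and for j = 1,2 and A ⊆ C, Qj(A) = Σ ∏_{e∈Mj} x_e, the sum over all sets Mj ⊆ Ej of pairwise non-adjacent edges covering every vertex of Vj ∪ A exactly once and covering no vertex of C∖A. (This is Theorem 3.5 of the paper, the evaluation of the exterior-algebra pairing P_G(x) = ⟨P_{G1^{S′}}(z1), P_{G2^{S′}}(z2)⟩, where Gj^{S′} is obtained from Gj by attaching the core graph S′.) -/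
import Mathlib


open Finset

/-- Degree of the vertex `v` in the graph `(V, F)`: each edge `e ∈ F` contributes `1` for each
of its two (ordered) endpoints equal to `v`; in particular a loop at `v` contributes `2`.
A subset `M` is a perfect matching (a set of pairwise non-adjacent non-loop edges covering
every vertex exactly once) iff every vertex has degree `1` in `M`. -/
def degIn {V E : Type*} [DecidableEq V] (ends : E → V × V) (F : Finset E) (v : V) : ℕ :=
  ∑ e ∈ F, ((if (ends e).1 = v then 1 else 0) + (if (ends e).2 = v then 1 else 0))

lemma degIn_union {V E : Type*} [DecidableEq V] [DecidableEq E] (ends : E → V × V)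
    {M1 M2 : Finset E} (h : Disjoint M1 M2) (v : V) :
    degIn ends (M1 ∪ M2) v = degIn ends M1 v + degIn ends M2 v :=
  Finset.sum_union h

lemma degIn_eq_zero {V E : Type*} [DecidableEq V] (ends : E → V × V)
    {M : Finset E} {v : V} (h : ∀ e ∈ M, (ends e).1 ≠ v ∧ (ends e).2 ≠ v) :
    degIn ends M v = 0 :=
  Finset.sum_eq_zero fun e he => by simp [(h e he).1, (h e he).2]

open scoped Classical in
/-- Theorem 3.5 of the paper: under the gluing setup, the dimer partition
function factorizes through the cut:
`Σ_{M perfect matching of G} ∏_{e∈M} x_e = Σ_{A ⊆ C} Q1(A)·Q2(C∖A)`, where `Qj(A)` sums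
`∏_{e∈Mj} x_e` over the matchings `Mj ⊆ Ej` covering every vertex of `Vj ∪ A` exactly once
and covering no vertex of `C∖A`. -/
theorem dimer_gluing {V E : Type*} [Fintype V] [DecidableEq V]
    [Fintype E] [DecidableEq E] {R : Type*} [CommRing R]
    (V1 V2 C : Finset V)
    (hd12 : Disjoint V1 V2) (hd1C : Disjoint V1 C) (hd2C : Disjoint V2 C)
    (hVunion : V1 ∪ V2 ∪ C = Finset.univ)
    (hCeven : Even C.card) (hV1even : Even V1.card) (hV2even : Even V2.card)
    (E1 E2 : Finset E) (hdE : Disjoint E1 E2) (hEunion : E1 ∪ E2 = Finset.univ)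
    (ends : E → V × V)
    (hE1 : ∀ e ∈ E1, (ends e).1 ∈ V1 ∪ C ∧ (ends e).2 ∈ V1 ∪ C)
    (hE2 : ∀ e ∈ E2, (ends e).1 ∈ V2 ∪ C ∧ (ends e).2 ∈ V2 ∪ C)
    (x : E → R) :
    (∑ M ∈ Finset.univ.powerset.filter (fun M : Finset E => ∀ v : V, degIn ends M v = 1),
        ∏ e ∈ M, x e) =
      ∑ A ∈ C.powerset,
        (∑ M ∈ E1.powerset.filter (fun M : Finset E =>
            (∀ v ∈ V1, degIn ends M v = 1) ∧ (∀ v ∈ A, degIn ends M v = 1) ∧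
              ∀ v ∈ C \ A, degIn ends M v = 0),
          ∏ e ∈ M, x e) *
        ∑ M ∈ E2.powerset.filter (fun M : Finset E =>
            (∀ v ∈ V2, degIn ends M v = 1) ∧ (∀ v ∈ C \ A, degIn ends M v = 1) ∧
              ∀ v ∈ C \ (C \ A), degIn ends M v = 0),
          ∏ e ∈ M, x e := by
  classical
  -- abbreviations
  set S1 : Finset V → Finset (Finset E) := fun A =>
    E1.powerset.filter (fun M : Finset E =>
      (∀ v ∈ V1, degIn ends M v = 1) ∧ (∀ v ∈ A, degIn ends M v = 1) ∧
        ∀ v ∈ C \ A, degIn ends M v = 0) with hS1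
  set S2 : Finset V → Finset (Finset E) := fun A =>
    E2.powerset.filter (fun M : Finset E =>
      (∀ v ∈ V2, degIn ends M v = 1) ∧ (∀ v ∈ C \ A, degIn ends M v = 1) ∧
        ∀ v ∈ C \ (C \ A), degIn ends M v = 0) with hS2
  have key : ∀ A ∈ C.powerset,
      (∑ M ∈ S1 A, ∏ e ∈ M, x e) * (∑ M ∈ S2 A, ∏ e ∈ M, x e)
        = ∑ p ∈ (S1 A) ×ˢ (S2 A), ∏ e ∈ p.1 ∪ p.2, x e := by
    intro A _
    rw [Finset.sum_mul_sum, Finset.sum_product]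
    refine Finset.sum_congr rfl fun M1 h1 => Finset.sum_congr rfl fun M2 h2 => ?_
    have hM1 : M1 ⊆ E1 := Finset.mem_powerset.mp (Finset.mem_filter.mp h1).1
    have hM2 : M2 ⊆ E2 := Finset.mem_powerset.mp (Finset.mem_filter.mp h2).1
    exact (Finset.prod_union (hdE.mono hM1 hM2)).symm
  rw [Finset.sum_congr rfl key, Finset.sum_sigma']
  -- zero-degree facts
  have h2zero : ∀ {M : Finset E}, M ⊆ E2 → ∀ v ∈ V1, degIn ends M v = 0 := by
    intro M hM v hv
    refine degIn_eq_zero ends fun e he => ?_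
    obtain ⟨ha, hb⟩ := hE2 e (hM he)
    have hvn : v ∉ V2 ∪ C := by
      simp only [Finset.mem_union, not_or]
      exact ⟨Finset.disjoint_left.mp hd12 hv, Finset.disjoint_left.mp hd1C hv⟩
    exact ⟨fun h => hvn (h ▸ ha), fun h => hvn (h ▸ hb)⟩
  have h1zero : ∀ {M : Finset E}, M ⊆ E1 → ∀ v ∈ V2, degIn ends M v = 0 := by
    intro M hM v hv
    refine degIn_eq_zero ends fun e he => ?_
    obtain ⟨ha, hb⟩ := hE1 e (hM he)
    have hvn : v ∉ V1 ∪ C := by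
      simp only [Finset.mem_union, not_or]
      exact ⟨Finset.disjoint_right.mp hd12 hv, Finset.disjoint_left.mp hd2C hv⟩
    exact ⟨fun h => hvn (h ▸ ha), fun h => hvn (h ▸ hb)⟩
  -- the bijection
  refine Finset.sum_bij'
    (fun M _ => (⟨C.filter (fun v => degIn ends (M ∩ E1) v = 1), (M ∩ E1, M ∩ E2)⟩ :
      Σ _ : Finset V, Finset E × Finset E))
    (fun p _ => p.2.1 ∪ p.2.2) ?_ ?_ ?_ ?_ ?_
  · -- hi : forward membership
    intro M hM
    rw [Finset.mem_filter] at hM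
    have hdeg := hM.2
    have hsplit : ∀ v, degIn ends (M ∩ E1) v + degIn ends (M ∩ E2) v = 1 := by
      intro v
      rw [← degIn_union ends (hdE.mono (Finset.inter_subset_right) (Finset.inter_subset_right))]
      rw [← Finset.inter_union_distrib_left, hEunion, Finset.inter_univ]
      exact hdeg v
    have hz2 : ∀ v ∈ V1, degIn ends (M ∩ E2) v = 0 :=
      fun v hv => h2zero Finset.inter_subset_right v hv
    have hz1 : ∀ v ∈ V2, degIn ends (M ∩ E1) v = 0 :=
      fun v hv => h1zero Finset.inter_subset_right v hv
    rw [Finset.mem_sigma]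
    refine ⟨Finset.mem_powerset.mpr (Finset.filter_subset _ _), ?_⟩
    rw [Finset.mem_product]
    constructor
    · rw [hS1]; simp only [Finset.mem_filter, Finset.mem_powerset]
      refine ⟨Finset.inter_subset_right, fun v hv => ?_, fun v hv => hv.2,
        fun v hv => ?_⟩
      · have := hsplit v; have := hz2 v hv; omega
      · rw [Finset.mem_sdiff, Finset.mem_filter] at hv
        have h1 := hsplit v
        have : ¬ degIn ends (M ∩ E1) v = 1 := fun h => hv.2 ⟨hv.1, h⟩
        omega
    · rw [hS2]; simp only [Finset.mem_filter, Finset.mem_powerset]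
      refine ⟨Finset.inter_subset_right, fun v hv => ?_, fun v hv => ?_, fun v hv => ?_⟩
      · have := hsplit v; have := hz1 v hv; omega
      · rw [Finset.mem_sdiff, Finset.mem_filter] at hv
        have h1 := hsplit v
        have : ¬ degIn ends (M ∩ E1) v = 1 := fun h => hv.2 ⟨hv.1, h⟩
        omega
      · rw [Finset.mem_sdiff, Finset.mem_sdiff, Finset.mem_filter] at hv
        have h1 := hsplit v
        have : degIn ends (M ∩ E1) v = 1 := by
          by_contra h
          exact (hv.2 ⟨hv.1, fun hA => h hA.2⟩)
        omega
  · -- hj : backward membership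
    rintro ⟨A, M1, M2⟩ hp
    rw [Finset.mem_sigma, Finset.mem_product] at hp
    obtain ⟨hA, hp1, hp2⟩ := hp
    rw [hS1, Finset.mem_filter, Finset.mem_powerset] at hp1
    rw [hS2, Finset.mem_filter, Finset.mem_powerset] at hp2
    obtain ⟨hM1, c11, c12, c13⟩ := hp1
    obtain ⟨hM2, c21, c22, c23⟩ := hp2
    have hAC : A ⊆ C := Finset.mem_powerset.mp hA
    have hdisj : Disjoint M1 M2 := hdE.mono hM1 hM2
    rw [Finset.mem_filter, Finset.mem_powerset]
    refine ⟨Finset.subset_univ _, fun v => ?_⟩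
    rw [degIn_union ends hdisj]
    have hv : v ∈ V1 ∪ V2 ∪ C := hVunion ▸ Finset.mem_univ v
    rw [Finset.mem_union, Finset.mem_union] at hv
    rcases hv with (hv | hv) | hv
    · rw [c11 v hv, h2zero hM2 v hv]
    · rw [c21 v hv, h1zero hM1 v hv]
    · by_cases hvA : v ∈ A
      · rw [c12 v hvA, c23 v (by simp [Finset.mem_sdiff, hv, hvA])]
      · rw [c13 v (Finset.mem_sdiff.mpr ⟨hv, hvA⟩), c22 v (Finset.mem_sdiff.mpr ⟨hv, hvA⟩)]
  · -- left_inv : j (i M) = M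
    intro M hM
    simp only
    rw [← Finset.inter_union_distrib_left, hEunion, Finset.inter_univ]
  · -- right_inv : i (j p) = p
    rintro ⟨A, M1, M2⟩ hp
    simp only [Finset.mem_sigma, Finset.mem_product, hS1, hS2, Finset.mem_filter,
      Finset.mem_powerset] at hp
    obtain ⟨hA, ⟨hM1, c11, c12, c13⟩, hM2, c21, c22, c23⟩ := hp
    have hAC : A ⊆ C := hA
    have e1 : (M1 ∪ M2) ∩ E1 = M1 := by
      rw [Finset.union_inter_distrib_right, Finset.inter_eq_left.mpr hM1,
        Finset.disjoint_iff_inter_eq_empty.mp (Finset.disjoint_left.mpr fun a ha => Finset.disjoint_right.mp hdE (hM2 ha)),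
        Finset.union_empty]
    have e2 : (M1 ∪ M2) ∩ E2 = M2 := by
      rw [Finset.union_inter_distrib_right, Finset.inter_eq_left.mpr hM2,
        Finset.disjoint_iff_inter_eq_empty.mp (Finset.disjoint_left.mpr fun a ha => Finset.disjoint_left.mp hdE (hM1 ha)),
        Finset.empty_union]
    have eA : C.filter (fun v => degIn ends ((M1 ∪ M2) ∩ E1) v = 1) = A := by
      rw [e1]
      ext v
      rw [Finset.mem_filter]
      constructor
      · rintro ⟨hvC, hd⟩
        by_contra hvA
        rw [c13 v (Finset.mem_sdiff.mpr ⟨hvC, hvA⟩)] at hd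
        exact one_ne_zero hd.symm
      · intro hvA
        exact ⟨hAC hvA, c12 v hvA⟩
    show (⟨C.filter (fun v => degIn ends ((M1 ∪ M2) ∩ E1) v = 1),
        ((M1 ∪ M2) ∩ E1, (M1 ∪ M2) ∩ E2)⟩ : Σ _ : Finset V, Finset E × Finset E) = ⟨A, (M1, M2)⟩
    rw [eA, e1, e2]
  · -- products agree
    intro M hM
    simp only
    rw [← Finset.inter_union_distrib_left, hEunion, Finset.inter_univ]
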